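/- Let (X, 𝒜, λ) be a probability space, k ∈ ℕ, U > 0, and let g₁, g₂ : X → ℝ^k be measurable functions with sup_{x∈X} |g₁(x)| ≤ U and sup_{x∈X} |g₂(x)| ≤ U. For g ∈ {g₁, g₂}, let P_g be the probability measure on ℝ^k × X with density p_g(y,x) = (2π)^{−k/2} exp(−|y − g(x)|²/2) with respect to dy × dλ, where dy is Lebesgue measure on ℝ^k. Then D₂(P_{g₁} ‖ P_{g₂}) ≤ e^{4U²} ∫_X |g₁(x) − g₂(x)|² dλ(x). -/

import Mathlib

open MeasureTheory Real

/-- The law `P_g` of one observation `(Y, X)` in the regression model `Y = g(X) + ε`,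
`ε ∼ N(0, I_k)`, `X ∼ λ`: the measure on `ℝ^k × X` with density
`p_g(y,x) = (2π)^{−k/2} exp(−|y − g(x)|²/2)` with respect to `dy × dλ`. -/
noncomputable def regressionLaw {X : Type*} [MeasurableSpace X] (lam : Measure X) (k : ℕ)
    (g : X → EuclideanSpace ℝ (Fin k)) : Measure (EuclideanSpace ℝ (Fin k) × X) :=
  (MeasureTheory.volume.prod lam).withDensity fun z =>
    ENNReal.ofReal ((2 * Real.pi) ^ (-(k : ℝ) / 2) * Real.exp (-‖z.1 - g z.2‖ ^ 2 / 2))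

/-- The 2-Rényi divergence `D₂(P‖Q) = log ∫ (dP/dQ) dP`. -/
noncomputable def renyi2Divergence {α : Type*} [MeasurableSpace α] (P Q : Measure α) : ℝ :=
  Real.log (∫ x, (P.rnDeriv Q x).toReal ∂P)


/-- Gaussian on `ℝ^k` is integrable. -/
theorem integrable_gauss (k : ℕ) (b : ℝ) (hb : 0 < b) :
    Integrable (fun v : EuclideanSpace ℝ (Fin k) => rexp (-b * ‖v‖^2)) := by
  have := (GaussianFourier.integrable_cexp_neg_mul_sq_norm_add (V := EuclideanSpace ℝ (Fin k))
    (b := (b:ℂ)) (by simpa using hb) 0 0).norm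
  simp only [zero_mul, add_zero] at this
  convert this using 2 with v
  rw [Complex.norm_exp]
  norm_num [← Complex.ofReal_pow]

/-- Normalization of the Gaussian density on `ℝ^k`. -/
theorem gauss_integral_one (k : ℕ) (m : EuclideanSpace ℝ (Fin k)) :
    ∫ y : EuclideanSpace ℝ (Fin k), (2*π) ^ (-(k:ℝ)/2) * rexp (-‖y - m‖^2/2) = 1 := by
  rw [integral_const_mul]
  have h0 : ∀ y : EuclideanSpace ℝ (Fin k), -‖y - m‖^2/2 = -(1/2) * ‖y - m‖^2 :=
    fun y => by ring
  simp_rw [h0]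
  rw [integral_sub_right_eq_self (fun y => rexp (-(1/2) * ‖y‖^2)) m,
    GaussianFourier.integral_rexp_neg_mul_sq_norm (by norm_num : (0:ℝ) < 1/2)]
  simp only [finrank_euclideanSpace_fin]
  rw [show (π / (1/2)) = 2*π by ring, ← Real.rpow_add (by positivity)]
  rw [show (-(k:ℝ)/2 + (k:ℝ)/2) = 0 by ring, Real.rpow_zero]

/-- The key algebraic identity for completing the square. -/
theorem key_identity {k : ℕ} (y a b : EuclideanSpace ℝ (Fin k)) :
    -‖y - a‖^2 + ‖y - b‖^2/2 = ‖a - b‖^2 + -‖y - ((2:ℝ) • a - b)‖^2/2 := by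
  have n1 : ∀ u v : EuclideanSpace ℝ (Fin k),
      ‖u - v‖^2 = ‖u‖^2 - 2*(inner ℝ u v : ℝ) + ‖v‖^2 := fun u v => norm_sub_sq_real u v
  have e2 : (inner ℝ y ((2:ℝ) • a - b) : ℝ) = 2*(inner ℝ y a : ℝ) - (inner ℝ y b : ℝ) := by
    rw [inner_sub_right, real_inner_smul_right]
  have e3 : ‖(2:ℝ) • a - b‖^2 = 4*‖a‖^2 - 4*(inner ℝ a b : ℝ) + ‖b‖^2 := by
    rw [n1, norm_smul, real_inner_smul_left]
    norm_num; ring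
  rw [n1 y a, n1 y b, n1 a b, n1 y ((2:ℝ) • a - b), e2, e3]
  ring

set_option maxHeartbeats 1000000 in
/-- If `sup_x |g₁(x)| ≤ U` and `sup_x |g₂(x)| ≤ U`, then
`D₂(P_{g₁} ‖ P_{g₂}) ≤ e^{4U²} ∫ |g₁ − g₂|² dλ`. -/
theorem renyi2Div_regressionLaw_le {X : Type*} [MeasurableSpace X]
    (lam : Measure X) [IsProbabilityMeasure lam] (k : ℕ) (U : ℝ) (hU : 0 < U)
    (g₁ g₂ : X → EuclideanSpace ℝ (Fin k)) (hm1 : Measurable g₁) (hm2 : Measurable g₂)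
    (hb1 : ∀ x, ‖g₁ x‖ ≤ U) (hb2 : ∀ x, ‖g₂ x‖ ≤ U) :
    renyi2Divergence (regressionLaw lam k g₁) (regressionLaw lam k g₂) ≤
      Real.exp (4 * U ^ 2) * ∫ x, ‖g₁ x - g₂ x‖ ^ 2 ∂lam := by
  have hπ : (0:ℝ) < 2*π := by positivity
  set c : ℝ := (2*π) ^ (-(k:ℝ)/2) with hc
  have hcpos : 0 < c := Real.rpow_pos_of_pos hπ _
  set μ : Measure (EuclideanSpace ℝ (Fin k) × X) := (volume).prod lam with hμ
  set p₁ : EuclideanSpace ℝ (Fin k) × X → ℝ :=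
    fun z => c * rexp (-‖z.1 - g₁ z.2‖^2/2) with hp₁
  set p₂ : EuclideanSpace ℝ (Fin k) × X → ℝ :=
    fun z => c * rexp (-‖z.1 - g₂ z.2‖^2/2) with hp₂
  have hp₁pos : ∀ z, 0 < p₁ z := fun z => by rw [hp₁]; positivity
  have hp₂pos : ∀ z, 0 < p₂ z := fun z => by rw [hp₂]; positivity
  have hnm1 : Measurable fun z : EuclideanSpace ℝ (Fin k) × X => ‖z.1 - g₁ z.2‖ :=
    (measurable_fst.sub (hm1.comp measurable_snd)).norm
  have hnm2 : Measurable fun z : EuclideanSpace ℝ (Fin k) × X => ‖z.1 - g₂ z.2‖ :=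
    (measurable_fst.sub (hm2.comp measurable_snd)).norm
  have hmp₁ : Measurable p₁ :=
    measurable_const.mul (((hnm1.pow_const 2).neg.div_const 2).exp)
  have hmp₂ : Measurable p₂ :=
    measurable_const.mul (((hnm2.pow_const 2).neg.div_const 2).exp)
  have hP₁ : regressionLaw lam k g₁ = μ.withDensity (fun z => ENNReal.ofReal (p₁ z)) := rfl
  have hP₂ : regressionLaw lam k g₂ = μ.withDensity (fun z => ENNReal.ofReal (p₂ z)) := rfl
  haveI hsf₁ : SigmaFinite (μ.withDensity fun z => ENNReal.ofReal (p₁ z)) :=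
    SigmaFinite.withDensity_of_ne_top (ae_of_all _ fun z => ENNReal.ofReal_ne_top)
  -- Radon–Nikodym derivative
  have h1 : (μ.withDensity fun z => ENNReal.ofReal (p₁ z)).rnDeriv
      (μ.withDensity fun z => ENNReal.ofReal (p₂ z)) =ᵐ[μ]
      fun z => (ENNReal.ofReal (p₂ z))⁻¹ * ENNReal.ofReal (p₁ z) := by
    have hr := Measure.rnDeriv_withDensity_right
      (μ.withDensity fun z => ENNReal.ofReal (p₁ z)) μ
      (hmp₂.ennreal_ofReal).aemeasurable
      (ae_of_all _ fun z => (ENNReal.ofReal_pos.mpr (hp₂pos z)).ne')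
      (ae_of_all _ fun z => ENNReal.ofReal_ne_top)
    have hd := Measure.rnDeriv_withDensity μ (hmp₁.ennreal_ofReal)
    filter_upwards [hr, hd] with z hz hz'
    rw [hz, hz']
  have hac : (μ.withDensity fun z => ENNReal.ofReal (p₁ z)) ≪ μ :=
    withDensity_absolutelyContinuous _ _
  -- integral over P₁ as an integral over μ
  have h3 : ∫ z, ((regressionLaw lam k g₁).rnDeriv (regressionLaw lam k g₂) z).toReal
      ∂(regressionLaw lam k g₁) = ∫ z, p₁ z * (p₁ z / p₂ z) ∂μ := by
    rw [hP₁, hP₂]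
    have h1' : (fun z => ((μ.withDensity fun z => ENNReal.ofReal (p₁ z)).rnDeriv
          (μ.withDensity fun z => ENNReal.ofReal (p₂ z)) z).toReal)
        =ᵐ[μ.withDensity fun z => ENNReal.ofReal (p₁ z)] fun z => p₁ z / p₂ z := by
      filter_upwards [h1.filter_mono hac.ae_le] with z hz
      rw [hz, ENNReal.toReal_mul, ENNReal.toReal_inv,
        ENNReal.toReal_ofReal (hp₁pos z).le, ENNReal.toReal_ofReal (hp₂pos z).le,
        div_eq_inv_mul]
    rw [integral_congr_ae h1']
    have hwd : (μ.withDensity fun z => ENNReal.ofReal (p₁ z))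
        = μ.withDensity fun z => ((p₁ z).toNNReal : ENNReal) := rfl
    rw [hwd, integral_withDensity_eq_integral_smul (hmp₁.real_toNNReal)]
    refine integral_congr_ae (ae_of_all _ fun z => ?_)
    simp only [NNReal.smul_def, Real.coe_toNNReal _ (hp₁pos z).le, smul_eq_mul]
  -- pointwise product form
  set m : X → EuclideanSpace ℝ (Fin k) := fun x => (2:ℝ) • g₁ x - g₂ x with hmm
  set F : EuclideanSpace ℝ (Fin k) × X → ℝ :=
    fun z => rexp (‖g₁ z.2 - g₂ z.2‖^2) * (c * rexp (-‖z.1 - m z.2‖^2/2)) with hF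
  have hptF : ∀ z, p₁ z * (p₁ z / p₂ z) = F z := by
    intro z
    have hA := key_identity z.1 (g₁ z.2) (g₂ z.2)
    show (c * rexp (-‖z.1 - g₁ z.2‖^2/2)) *
        ((c * rexp (-‖z.1 - g₁ z.2‖^2/2)) / (c * rexp (-‖z.1 - g₂ z.2‖^2/2)))
        = rexp (‖g₁ z.2 - g₂ z.2‖^2) * (c * rexp (-‖z.1 - ((2:ℝ) • g₁ z.2 - g₂ z.2)‖^2/2))
    rw [mul_div_mul_left _ _ hcpos.ne', ← Real.exp_sub]
    have l1 : ∀ u v : ℝ, (c * rexp u) * rexp v = c * rexp (u + v) := fun u v => by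
      rw [Real.exp_add]; ring
    have l2 : ∀ u v : ℝ, rexp u * (c * rexp v) = c * rexp (u + v) := fun u v => by
      rw [Real.exp_add]; ring
    rw [l1, l2]
    have harg : -‖z.1 - g₁ z.2‖ ^ 2 / 2 + (-‖z.1 - g₁ z.2‖ ^ 2 / 2 - -‖z.1 - g₂ z.2‖ ^ 2 / 2)
        = ‖g₁ z.2 - g₂ z.2‖ ^ 2 + -‖z.1 - ((2:ℝ) • g₁ z.2 - g₂ z.2)‖ ^ 2 / 2 := by
      linarith [hA]
    rw [harg]
  -- integrability of F
  have hmm' : Measurable m := (hm1.const_smul (2:ℝ)).sub hm2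
  have hq2 : Measurable fun z : EuclideanSpace ℝ (Fin k) × X => ‖z.1 - m z.2‖ :=
    (measurable_fst.sub (hmm'.comp measurable_snd)).norm
  have hq1 : Measurable fun z : EuclideanSpace ℝ (Fin k) × X => ‖g₁ z.2 - g₂ z.2‖ :=
    ((hm1.sub hm2).comp measurable_snd).norm
  have hFmeas : Measurable F :=
    ((hq1.pow_const 2).exp).mul
      (measurable_const.mul (((hq2.pow_const 2).neg.div_const 2).exp))
  have hmb : ∀ x, ‖m x‖ ≤ 3*U := by
    intro x
    calc ‖(2:ℝ) • g₁ x - g₂ x‖ ≤ ‖(2:ℝ) • g₁ x‖ + ‖g₂ x‖ := norm_sub_le _ _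
      _ = 2*‖g₁ x‖ + ‖g₂ x‖ := by rw [norm_smul]; norm_num
      _ ≤ 3*U := by linarith [hb1 x, hb2 x]
  have hd4 : ∀ x, ‖g₁ x - g₂ x‖^2 ≤ 4*U^2 := by
    intro x
    have h := norm_sub_le (g₁ x) (g₂ x)
    nlinarith [hb1 x, hb2 x, norm_nonneg (g₁ x - g₂ x), norm_nonneg (g₁ x), norm_nonneg (g₂ x)]
  have hFbound : ∀ z, ‖F z‖ ≤ (rexp (4*U^2) * (c * rexp (9*U^2))) * rexp (-(1/4) * ‖z.1‖^2) := by
    intro z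
    have hFpos : 0 < F z := by rw [hF]; positivity
    rw [Real.norm_eq_abs, abs_of_pos hFpos]
    have hexp1 : rexp (‖g₁ z.2 - g₂ z.2‖^2) ≤ rexp (4*U^2) := Real.exp_le_exp.2 (hd4 z.2)
    have hexp2 : rexp (-‖z.1 - m z.2‖^2/2) ≤ rexp (9*U^2) * rexp (-(1/4) * ‖z.1‖^2) := by
      rw [← Real.exp_add]
      apply Real.exp_le_exp.2
      have hns : ‖z.1 - m z.2‖^2 = ‖z.1‖^2 - 2*(inner ℝ z.1 (m z.2) : ℝ) + ‖m z.2‖^2 :=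
        norm_sub_sq_real _ _
      have hin : (inner ℝ z.1 (m z.2) : ℝ) ≤ ‖z.1‖ * ‖m z.2‖ := real_inner_le_norm _ _
      nlinarith [hmb z.2, norm_nonneg z.1, norm_nonneg (m z.2), hU,
        sq_nonneg (‖z.1‖ - 2*‖m z.2‖)]
    calc rexp (‖g₁ z.2 - g₂ z.2‖^2) * (c * rexp (-‖z.1 - m z.2‖^2/2))
        ≤ rexp (4*U^2) * (c * (rexp (9*U^2) * rexp (-(1/4) * ‖z.1‖^2))) := by
          apply mul_le_mul hexp1 _ (by positivity) (Real.exp_pos _).le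
          exact mul_le_mul_of_nonneg_left hexp2 hcpos.le
      _ = (rexp (4*U^2) * (c * rexp (9*U^2))) * rexp (-(1/4) * ‖z.1‖^2) := by ring
  have hdom : Integrable
      (fun z : EuclideanSpace ℝ (Fin k) × X =>
        (rexp (4*U^2) * (c * rexp (9*U^2))) * rexp (-(1/4) * ‖z.1‖^2)) μ := by
    have h1 : Integrable (fun z : EuclideanSpace ℝ (Fin k) × X =>
        rexp (-(1/4) * ‖z.1‖^2) * 1) μ :=
      (integrable_gauss k (1/4) (by norm_num)).mul_prod (integrable_const 1)
    simp only [mul_one] at h1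
    exact h1.const_mul _
  have hFint : Integrable F μ :=
    hdom.mono' hFmeas.aestronglyMeasurable (ae_of_all _ hFbound)
  -- Fubini
  have h5 : ∫ z, F z ∂μ = ∫ x, rexp (‖g₁ x - g₂ x‖^2) ∂lam := by
    rw [hμ] at hFint ⊢
    rw [integral_prod_symm F hFint]
    refine integral_congr_ae (ae_of_all _ fun x => ?_)
    show ∫ y, rexp (‖g₁ x - g₂ x‖^2) * (c * rexp (-‖y - m x‖^2/2)) = rexp (‖g₁ x - g₂ x‖^2)
    rw [integral_const_mul, hc, gauss_integral_one k (m x), mul_one]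
  -- final estimates
  set I := ∫ x, rexp (‖g₁ x - g₂ x‖^2) ∂lam with hI
  have hd2int : Integrable (fun x => ‖g₁ x - g₂ x‖^2) lam := by
    refine (integrable_const (4*U^2)).mono'
      (((hm1.sub hm2).norm.pow_const 2).aestronglyMeasurable) (ae_of_all _ fun x => ?_)
    rw [Real.norm_eq_abs, abs_of_nonneg (sq_nonneg _)]
    exact hd4 x
  have hIint : Integrable (fun x => rexp (‖g₁ x - g₂ x‖^2)) lam := by
    refine (integrable_const (rexp (4*U^2))).mono'
      ((((hm1.sub hm2).norm.pow_const 2).exp).aestronglyMeasurable) (ae_of_all _ fun x => ?_)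
    rw [Real.norm_eq_abs, abs_of_pos (Real.exp_pos _)]
    exact Real.exp_le_exp.2 (hd4 x)
  have hI1 : 1 ≤ I := by
    have hone : ∫ (_ : X), (1:ℝ) ∂lam = 1 := by simp
    rw [hI, ← hone]
    exact integral_mono (integrable_const 1) hIint fun x => Real.one_le_exp (sq_nonneg _)
  have hlog : Real.log I ≤ I - 1 := Real.log_le_sub_one_of_pos (by linarith)
  have h6 : I - 1 ≤ rexp (4*U^2) * ∫ x, ‖g₁ x - g₂ x‖^2 ∂lam := by
    have hsub : I - 1 = ∫ x, (rexp (‖g₁ x - g₂ x‖^2) - 1) ∂lam := by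
      rw [hI, integral_sub hIint (integrable_const 1)]; simp
    rw [hsub]
    calc ∫ x, (rexp (‖g₁ x - g₂ x‖^2) - 1) ∂lam
        ≤ ∫ x, rexp (4*U^2) * ‖g₁ x - g₂ x‖^2 ∂lam := by
          refine integral_mono (hIint.sub (integrable_const 1)) (hd2int.const_mul _) fun x => ?_
          have ht0 : (0:ℝ) ≤ ‖g₁ x - g₂ x‖^2 := sq_nonneg _
          have key : (1 - ‖g₁ x - g₂ x‖^2) * rexp (‖g₁ x - g₂ x‖^2) ≤ 1 := by
            have h := Real.add_one_le_exp (-(‖g₁ x - g₂ x‖^2))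
            have h2 := mul_le_mul_of_nonneg_right h (Real.exp_pos (‖g₁ x - g₂ x‖^2)).le
            rw [← Real.exp_add, neg_add_cancel, Real.exp_zero] at h2
            linarith [h2]
          have h2 : ‖g₁ x - g₂ x‖^2 * rexp (‖g₁ x - g₂ x‖^2)
              ≤ ‖g₁ x - g₂ x‖^2 * rexp (4*U^2) :=
            mul_le_mul_of_nonneg_left (Real.exp_le_exp.2 (hd4 x)) ht0
          nlinarith [key, h2]
      _ = rexp (4*U^2) * ∫ x, ‖g₁ x - g₂ x‖^2 ∂lam := integral_const_mul _ _
  show Real.log (∫ z, ((regressionLaw lam k g₁).rnDeriv (regressionLaw lam k g₂) z).toReal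
      ∂(regressionLaw lam k g₁)) ≤ _
  rw [h3, integral_congr_ae (ae_of_all _ hptF), h5]
  calc Real.log I ≤ I - 1 := hlog
    _ ≤ rexp (4*U^2) * ∫ x, ‖g₁ x - g₂ x‖^2 ∂lam := h6
    _ = rexp (4*U^2) * ∫ x, ‖g₁ x - g₂ x‖^2 ∂lam := rfl
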